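/- Let 0 < α ≤ α' ≤ 1, let F₀, F_a : ℝ → ℝ, set Fₘ(x) = (1−α)·F₀(x) + α·F_a(x), and define F'_a(x) = (Fₘ(x) − (1−α')·F₀(x)) / α'. Then for every x ∈ ℝ, F'_a(x) − F_a(x) = (α − α')·(Fₘ(x) − F₀(x)) / (α·α'); in particular, if the anomaly detector is admissible, i.e., F₀(x) ≥ Fₘ(x) for all x ∈ ℝ, then F_a(x) ≤ F'_a(x) for all x ∈ ℝ. -/

import Mathlib

/-- The difference between the over-estimated alien CDF and the true alien CDF
is `(α − α')·(Fₘ(x) − F₀(x)) / (α·α')`; under admissibility (`F₀ ≥ Fₘ`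
pointwise), it follows that `F_a ≤ F'_a` pointwise. -/
theorem overestimate_alien_cdf_dominates
    (α α' : ℝ) (hα : 0 < α) (hαα' : α ≤ α') (hα' : α' ≤ 1)
    (F₀ Fa : ℝ → ℝ)
    (Fₘ : ℝ → ℝ) (hFₘ : ∀ x, Fₘ x = (1 - α) * F₀ x + α * Fa x)
    (F'a : ℝ → ℝ) (hF'a : ∀ x, F'a x = (Fₘ x - (1 - α') * F₀ x) / α') :
    (∀ x, F'a x - Fa x = (α - α') * (Fₘ x - F₀ x) / (α * α')) ∧
      ((∀ x, F₀ x ≥ Fₘ x) → ∀ x, Fa x ≤ F'a x) := by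
  have hα'pos : 0 < α' := lt_of_lt_of_le hα hαα'
  have key : ∀ x, F'a x - Fa x = (α - α') * (Fₘ x - F₀ x) / (α * α') := by
    intro x
    have hFa : Fa x = (Fₘ x - (1 - α) * F₀ x) / α := by
      rw [hFₘ x]; field_simp; ring
    rw [hF'a x, hFa, hFₘ x]
    field_simp
    ring
  refine ⟨key, fun hadm x => ?_⟩
  have h := key x
  have h1 : (α - α') * (Fₘ x - F₀ x) / (α * α') ≥ 0 := by
    apply div_nonneg
    · nlinarith [hadm x]
    · positivity
  linarith
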